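/- Let β > 0, μ > 1, and f, g ∈ E_{(β,μ)}. Define ψ(m) = (2π)^{-1/2} ∫_{-∞}^{∞} f(m - m₁) g(m₁) dm₁. Then ψ ∈ E_{(β,μ)}, and for all z in the strip H_β one has F⁻¹(f)(z) · F⁻¹(g)(z) = F⁻¹(ψ)(z). -/

import Mathlib

open MeasureTheory Real Complex

/-- Membership in the space `E_{(β,μ)}`: continuous functions with finite weighted sup norm. -/
def MemE (β μ : ℝ) (h : ℝ → ℂ) : Prop :=
  Continuous h ∧ BddAbove (Set.range fun m : ℝ =>
    (1 + |m|) ^ μ * Real.exp (β * |m|) * ‖h m‖)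

/-- The horizontal strip `H_β`. -/
def Hstrip (β : ℝ) : Set ℂ := {z : ℂ | |z.im| < β}

/-- The inverse Fourier transform at a real point. -/
noncomputable def invFourier (f : ℝ → ℂ) (x : ℝ) : ℂ :=
  (1 / Real.sqrt (2 * Real.pi)) * ∫ m : ℝ, f m * Complex.exp (Complex.I * x * m)

lemma memE_bound {β μ C : ℝ} {h : ℝ → ℂ}
    (hub : ∀ m : ℝ, (1 + |m|) ^ μ * Real.exp (β * |m|) * ‖h m‖ ≤ C) :
    ∀ m : ℝ, ‖h m‖ ≤ C * (1 + |m|) ^ (-μ) * Real.exp (-(β * |m|)) := by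
  intro m
  have hw : (0:ℝ) < (1 + |m|) ^ μ * Real.exp (β * |m|) := by positivity
  have h1 := hub m
  rw [Real.rpow_neg (by positivity), Real.exp_neg, mul_assoc, ← mul_inv, ← div_eq_mul_inv,
    le_div_iff₀ hw]
  nlinarith [norm_nonneg (h m)]

lemma bound_nonneg {β μ C : ℝ} {h : ℝ → ℂ}
    (hb : ∀ m : ℝ, ‖h m‖ ≤ C * (1 + |m|) ^ (-μ) * Real.exp (-(β * |m|))) : 0 ≤ C := by
  have h0 := hb 0
  simp at h0
  exact le_trans (norm_nonneg _) h0

lemma memE_integrable {β μ C : ℝ} (hβ : 0 < β) (hμ : 1 < μ) {h : ℝ → ℂ}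
    (hc : Continuous h)
    (hb : ∀ m : ℝ, ‖h m‖ ≤ C * (1 + |m|) ^ (-μ) * Real.exp (-(β * |m|))) :
    Integrable h := by
  have hC : 0 ≤ C := bound_nonneg hb
  have hint : Integrable (fun x : ℝ => C * (1 + ‖x‖) ^ (-μ)) :=
    (integrable_one_add_norm (by simp; linarith)).const_mul C
  refine hint.mono' hc.aestronglyMeasurable (Filter.Eventually.of_forall fun m => ?_)
  have h2 : Real.exp (-(β * |m|)) ≤ 1 := Real.exp_le_one_iff.2 (neg_nonpos.2 (by positivity))
  have h3 := hb m
  have h4 : (0:ℝ) ≤ (1 + |m|) ^ (-μ) := Real.rpow_nonneg (by positivity) _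
  simp only [Real.norm_eq_abs]
  nlinarith [norm_nonneg (h m), Real.exp_pos (-(β * |m|))]

lemma polyaux {μ u v w : ℝ} (hμ : 0 < μ) (hu : 0 ≤ u) (hv : 0 ≤ v) (hw : 0 ≤ w)
    (h : w ≤ 2 * u) :
    (1+u) ^ (-μ) * (1+v) ^ (-μ) ≤ 2 ^ μ * (1+w) ^ (-μ) * ((1+u) ^ (-μ) + (1+v) ^ (-μ)) := by
  have pu : (0:ℝ) < (1+u) ^ μ := Real.rpow_pos_of_pos (by linarith) _
  have pw : (0:ℝ) < (1+w) ^ μ := Real.rpow_pos_of_pos (by linarith) _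
  have key : (1+w) ^ μ ≤ 2 ^ μ * (1+u) ^ μ := by
    rw [← Real.mul_rpow (by norm_num) (by linarith)]
    exact Real.rpow_le_rpow (by linarith) (by linarith) hμ.le
  have h1 : (1+u) ^ (-μ) ≤ 2 ^ μ * (1+w) ^ (-μ) := by
    rw [Real.rpow_neg (by linarith), Real.rpow_neg (by linarith)]
    rw [← div_eq_mul_inv, le_div_iff₀ pw, inv_mul_eq_div, div_le_iff₀ pu]
    linarith
  have h2 : (0:ℝ) ≤ (1+v) ^ (-μ) := Real.rpow_nonneg (by linarith) _
  have h3 : (0:ℝ) ≤ (1+u) ^ (-μ) := Real.rpow_nonneg (by linarith) _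
  have h4 : (0:ℝ) ≤ 2 ^ μ * (1+w) ^ (-μ) := by positivity
  nlinarith

lemma keybound {β μ : ℝ} (hβ : 0 < β) (hμ : 0 < μ) (m b : ℝ) :
    ((1+|m-b|) ^ (-μ) * Real.exp (-(β*|m-b|))) * ((1+|b|) ^ (-μ) * Real.exp (-(β*|b|)))
    ≤ Real.exp (-(β*|m|)) *
      (2 ^ μ * (1+|m|) ^ (-μ) * ((1+|m-b|) ^ (-μ) + (1+|b|) ^ (-μ))) := by
  have habs : |m| ≤ |m-b| + |b| := by
    calc |m| = |(m-b) + b| := by ring_nf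
      _ ≤ |m-b| + |b| := abs_add_le _ _
  have hexp : Real.exp (-(β*|m-b|)) * Real.exp (-(β*|b|)) ≤ Real.exp (-(β*|m|)) := by
    rw [← Real.exp_add]
    apply Real.exp_le_exp.2
    nlinarith
  have hpoly : (1+|m-b|) ^ (-μ) * (1+|b|) ^ (-μ)
      ≤ 2 ^ μ * (1+|m|) ^ (-μ) * ((1+|m-b|) ^ (-μ) + (1+|b|) ^ (-μ)) := by
    rcases le_total |b| |m-b| with h | h
    · exact polyaux hμ (abs_nonneg _) (abs_nonneg _) (abs_nonneg _) (by linarith)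
    · have := polyaux hμ (abs_nonneg b) (abs_nonneg (m-b)) (abs_nonneg m) (by linarith)
      calc (1+|m-b|) ^ (-μ) * (1+|b|) ^ (-μ) = (1+|b|) ^ (-μ) * (1+|m-b|) ^ (-μ) := by ring
        _ ≤ 2 ^ μ * (1+|m|) ^ (-μ) * ((1+|b|) ^ (-μ) + (1+|m-b|) ^ (-μ)) := this
        _ = 2 ^ μ * (1+|m|) ^ (-μ) * ((1+|m-b|) ^ (-μ) + (1+|b|) ^ (-μ)) := by ring
  have e1 : (0:ℝ) ≤ Real.exp (-(β*|m-b|)) * Real.exp (-(β*|b|)) := by positivity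
  have e2 : (0:ℝ) ≤ 2 ^ μ * (1+|m|) ^ (-μ) * ((1+|m-b|) ^ (-μ) + (1+|b|) ^ (-μ)) := by positivity
  calc ((1+|m-b|) ^ (-μ) * Real.exp (-(β*|m-b|))) * ((1+|b|) ^ (-μ) * Real.exp (-(β*|b|)))
      = ((1+|m-b|) ^ (-μ) * (1+|b|) ^ (-μ)) *
        (Real.exp (-(β*|m-b|)) * Real.exp (-(β*|b|))) := by ring
    _ ≤ (2 ^ μ * (1+|m|) ^ (-μ) * ((1+|m-b|) ^ (-μ) + (1+|b|) ^ (-μ))) *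
        Real.exp (-(β*|m|)) := mul_le_mul hpoly hexp e1 e2
    _ = _ := by ring

lemma conv_fourier (f g : ℝ → ℂ) (hfc : Continuous f) (hgc : Continuous g)
    (hintf : Integrable f) (hintg : Integrable g) (x : ℝ) :
    ∫ m : ℝ, (∫ b : ℝ, f (m - b) * g b) * Complex.exp (Complex.I * x * m)
      = (∫ m : ℝ, f m * Complex.exp (Complex.I * x * m)) *
        ∫ m : ℝ, g m * Complex.exp (Complex.I * x * m) := by
  set e : ℝ → ℂ := fun m => Complex.exp (Complex.I * x * m) with he_def
  have he : ∀ m : ℝ, ‖e m‖ = 1 := by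
    intro m; rw [he_def]; rw [Complex.norm_exp]; simp
  have hP : Integrable (fun p : ℝ × ℝ => f (p.1 - p.2) * g p.2 * e p.1)
      (volume.prod volume) := by
    have hQ : Integrable (fun p : ℝ × ℝ => ‖g p.2‖ * ‖f (p.1 - p.2)‖)
        (volume.prod volume) := by
      simpa using (hintg.norm).convolution_integrand (ContinuousLinearMap.mul ℝ ℝ) (hintf.norm)
    refine hQ.mono' ?_ (Filter.Eventually.of_forall fun p => ?_)
    · apply Continuous.aestronglyMeasurable
      apply Continuous.mul
      · exact (hfc.comp (continuous_fst.sub continuous_snd)).mul (hgc.comp continuous_snd)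
      · exact Complex.continuous_exp.comp
          (continuous_const.mul (Complex.continuous_ofReal.comp continuous_fst))
    · simp only [norm_mul, he]
      rw [mul_one, mul_comm]
  have h1 : ∀ m : ℝ, (∫ b : ℝ, f (m - b) * g b) * e m = ∫ b : ℝ, f (m - b) * g b * e m :=
    fun m => (integral_mul_const _ _).symm
  calc ∫ m : ℝ, (∫ b : ℝ, f (m - b) * g b) * e m
      = ∫ m : ℝ, ∫ b : ℝ, f (m - b) * g b * e m := by simp_rw [h1]
    _ = ∫ b : ℝ, ∫ m : ℝ, f (m - b) * g b * e m := integral_integral_swap hP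
    _ = ∫ b : ℝ, (∫ a : ℝ, f a * e a) * (g b * e b) := by
        refine integral_congr_ae (Filter.Eventually.of_forall fun b => ?_)
        show (∫ m : ℝ, f (m - b) * g b * e m) = (∫ a : ℝ, f a * e a) * (g b * e b)
        have h3 := integral_add_right_eq_self (μ := volume) (fun m => f (m - b) * g b * e m) b
        rw [← h3]
        have h4 : ∀ a : ℝ, f (a + b - b) * g b * e (a + b) = f a * e a * (g b * e b) := by
          intro a
          have h5 : e (a + b) = e a * e b := by
            simp only [he_def, Complex.ofReal_add, ← Complex.exp_add]
            ring_nf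
          rw [add_sub_cancel_right, h5]; ring
        simp_rw [h4]
        rw [integral_mul_const]
    _ = (∫ a : ℝ, f a * e a) * ∫ b : ℝ, g b * e b := integral_const_mul _ _

set_option maxHeartbeats 1000000 in
/-- Let `f, g ∈ E_{(β,μ)}` with `β > 0`, `μ > 1`, and
`ψ(m) = (2π)^{-1/2} ∫ f(m-m₁) g(m₁) dm₁`. Then `ψ ∈ E_{(β,μ)}`, and for all holomorphic
extensions `F`, `G`, `H` of `F⁻¹(f)`, `F⁻¹(g)`, `F⁻¹(ψ)` to the strip `H_β`, one has
`F(z) G(z) = H(z)` on `H_β`. -/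
theorem stmt3 (β μ : ℝ) (hβ : 0 < β) (hμ : 1 < μ) (f g : ℝ → ℂ)
    (hf : MemE β μ f) (hg : MemE β μ g) (ψ : ℝ → ℂ)
    (hψdef : ∀ m : ℝ, ψ m =
      (1 / Real.sqrt (2 * Real.pi)) * ∫ m₁ : ℝ, f (m - m₁) * g m₁) :
    MemE β μ ψ ∧
    ∀ F G H : ℂ → ℂ,
      DifferentiableOn ℂ F (Hstrip β) → DifferentiableOn ℂ G (Hstrip β) →
      DifferentiableOn ℂ H (Hstrip β) →
      (∀ x : ℝ, F (x : ℂ) = invFourier f x) →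
      (∀ x : ℝ, G (x : ℂ) = invFourier g x) →
      (∀ x : ℝ, H (x : ℂ) = invFourier ψ x) →
      ∀ z ∈ Hstrip β, F z * G z = H z := by
  obtain ⟨hfc, Cf, hCf⟩ := hf
  obtain ⟨hgc, Cg, hCg⟩ := hg
  have hubf : ∀ m : ℝ, (1 + |m|) ^ μ * Real.exp (β * |m|) * ‖f m‖ ≤ Cf :=
    fun m => hCf ⟨m, rfl⟩
  have hubg : ∀ m : ℝ, (1 + |m|) ^ μ * Real.exp (β * |m|) * ‖g m‖ ≤ Cg :=
    fun m => hCg ⟨m, rfl⟩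
  have hbf := memE_bound hubf
  have hbg := memE_bound hubg
  have hCf0 : 0 ≤ Cf := bound_nonneg hbf
  have hCg0 : 0 ≤ Cg := bound_nonneg hbg
  have hintf : Integrable f := memE_integrable hβ hμ hfc hbf
  have hintg : Integrable g := memE_integrable hβ hμ hgc hbg
  have hμ0 : (0:ℝ) < μ := by linarith
  -- integrability of the polynomial weight
  have hI : Integrable (fun t : ℝ => (1 + |t|) ^ (-μ)) volume := by
    have := integrable_one_add_norm (E := ℝ) (μ := volume) (r := μ) (by simpa using hμ)
    simpa [Real.norm_eq_abs] using this
  set I : ℝ := ∫ t : ℝ, (1 + |t|) ^ (-μ) with hIdef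
  have hInn : 0 ≤ I := integral_nonneg fun t => Real.rpow_nonneg (by positivity) _
  -- continuity of ψ
  set L : ℂ →L[ℂ] ℂ →L[ℂ] ℂ := ContinuousLinearMap.mul ℂ ℂ with hLdef
  have hgb : BddAbove (Set.range fun x : ℝ => ‖g x‖) := by
    refine ⟨Cg, ?_⟩
    rintro y ⟨m, rfl⟩
    have h1 : (1 + |m|) ^ (-μ) ≤ 1 :=
      Real.rpow_le_one_of_one_le_of_nonpos (by simp [abs_nonneg]) (by linarith)
    have h2 : Real.exp (-(β * |m|)) ≤ 1 := Real.exp_le_one_iff.2 (neg_nonpos.2 (by positivity))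
    have h3 := hbg m
    have h4 : (0:ℝ) ≤ (1 + |m|) ^ (-μ) := Real.rpow_nonneg (by positivity) _
    show ‖g m‖ ≤ Cg
    nlinarith [mul_nonneg (mul_nonneg hCg0 h4) (sub_nonneg.2 h2),
      mul_nonneg hCg0 (sub_nonneg.2 h1), Real.exp_pos (-(β * |m|))]
  have hconvc : Continuous (MeasureTheory.convolution f g L volume) :=
    hgb.continuous_convolution_right_of_integrable L hintf hgc
  have hψc : Continuous ψ := by
    have hc : Continuous fun m : ℝ => (1 / Real.sqrt (2 * Real.pi) : ℂ) *
        MeasureTheory.convolution f g L volume m := continuous_const.mul hconvc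
    refine hc.congr fun m => ?_
    rw [hψdef m, convolution_eq_swap]
    simp [hLdef]
  -- the weighted bound for ψ
  set A : ℝ := ‖(1 : ℂ) / Real.sqrt (2 * Real.pi)‖ * (Cf * Cg * (2 ^ μ * (2 * I)))
    with hAdef
  have hψbound : ∀ m : ℝ,
      (1 + |m|) ^ μ * Real.exp (β * |m|) * ‖ψ m‖ ≤ A := by
    intro m
    set K : ℝ := Cf * Cg * Real.exp (-(β * |m|)) * (2 ^ μ * (1 + |m|) ^ (-μ)) with hKdef
    have hK0 : 0 ≤ K := by positivity
    have hDint : Integrable (fun b : ℝ => (1 + |m - b|) ^ (-μ) + (1 + |b|) ^ (-μ)) :=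
      (hI.comp_sub_left m).add hI
    have hpt : ∀ b : ℝ, ‖f (m - b) * g b‖ ≤
        K * ((1 + |m - b|) ^ (-μ) + (1 + |b|) ^ (-μ)) := by
      intro b
      have h1 : ‖f (m - b) * g b‖ ≤
          (Cf * (1 + |m - b|) ^ (-μ) * Real.exp (-(β * |m - b|))) *
          (Cg * (1 + |b|) ^ (-μ) * Real.exp (-(β * |b|))) := by
        rw [norm_mul]
        exact mul_le_mul (hbf (m - b)) (hbg b) (norm_nonneg _) (by positivity)
      have h2 := keybound hβ hμ0 m b
      calc ‖f (m - b) * g b‖ ≤ _ := h1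
        _ = (Cf * Cg) * (((1 + |m - b|) ^ (-μ) * Real.exp (-(β * |m - b|))) *
              ((1 + |b|) ^ (-μ) * Real.exp (-(β * |b|)))) := by ring
        _ ≤ (Cf * Cg) * (Real.exp (-(β * |m|)) *
              (2 ^ μ * (1 + |m|) ^ (-μ) * ((1 + |m - b|) ^ (-μ) + (1 + |b|) ^ (-μ)))) :=
            mul_le_mul_of_nonneg_left h2 (by positivity)
        _ = K * ((1 + |m - b|) ^ (-μ) + (1 + |b|) ^ (-μ)) := by rw [hKdef]; ring
    have hfgint : Integrable (fun b : ℝ => f (m - b) * g b) := by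
      refine (hDint.const_mul K).mono' ?_ (Filter.Eventually.of_forall hpt)
      exact ((hfc.comp (continuous_const.sub continuous_id)).mul hgc).aestronglyMeasurable
    have hshift : (∫ b : ℝ, (1 + |m - b|) ^ (-μ)) = I :=
      integral_sub_left_eq_self (fun t : ℝ => (1 + |t|) ^ (-μ)) volume m
    have hnormle : (∫ b : ℝ, ‖f (m - b) * g b‖) ≤ K * (2 * I) := by
      calc (∫ b : ℝ, ‖f (m - b) * g b‖)
          ≤ ∫ b : ℝ, K * ((1 + |m - b|) ^ (-μ) + (1 + |b|) ^ (-μ)) :=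
            integral_mono hfgint.norm (hDint.const_mul K) hpt
        _ = K * ((∫ b : ℝ, (1 + |m - b|) ^ (-μ)) + ∫ b : ℝ, (1 + |b|) ^ (-μ)) := by
            rw [integral_const_mul, integral_add (hI.comp_sub_left m) hI]
        _ = K * (2 * I) := by rw [hshift, ← hIdef]; ring
    have habsψ : ‖ψ m‖ ≤
        ‖(1 : ℂ) / Real.sqrt (2 * Real.pi)‖ * (K * (2 * I)) := by
      rw [hψdef m, norm_mul]
      refine mul_le_mul_of_nonneg_left ?_ (norm_nonneg _)
      have hn := norm_integral_le_integral_norm (μ := volume) (fun b : ℝ => f (m - b) * g b)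
      exact hn.trans hnormle
    have hc1 : (1 + |m|) ^ μ * (1 + |m|) ^ (-μ) = 1 := by
      rw [← Real.rpow_add (by positivity)]; simp
    have hc2 : Real.exp (β * |m|) * Real.exp (-(β * |m|)) = 1 := by
      rw [← Real.exp_add]; simp
    have hw0 : (0:ℝ) ≤ (1 + |m|) ^ μ * Real.exp (β * |m|) := by positivity
    calc (1 + |m|) ^ μ * Real.exp (β * |m|) * ‖ψ m‖
        ≤ (1 + |m|) ^ μ * Real.exp (β * |m|) *
            (‖(1 : ℂ) / Real.sqrt (2 * Real.pi)‖ * (K * (2 * I))) := by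
          rw [mul_assoc, mul_assoc]
          exact mul_le_mul_of_nonneg_left (by
            exact mul_le_mul_of_nonneg_left habsψ (Real.exp_pos _).le)
            (Real.rpow_nonneg (by positivity) _)
      _ = A := by
          rw [hAdef, hKdef]
          calc (1 + |m|) ^ μ * Real.exp (β * |m|) *
                (‖(1 : ℂ) / Real.sqrt (2 * Real.pi)‖ *
                  (Cf * Cg * Real.exp (-(β * |m|)) * (2 ^ μ * (1 + |m|) ^ (-μ)) * (2 * I)))
              = ‖(1 : ℂ) / Real.sqrt (2 * Real.pi)‖ *
                  (Cf * Cg * (2 ^ μ * (2 * I))) *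
                  (((1 + |m|) ^ μ * (1 + |m|) ^ (-μ)) *
                    (Real.exp (β * |m|) * Real.exp (-(β * |m|)))) := by ring
            _ = _ := by rw [hc1, hc2]; ring
  have hψE : MemE β μ ψ := ⟨hψc, A, by rintro y ⟨m, rfl⟩; exact hψbound m⟩
  refine ⟨hψE, ?_⟩
  -- the identity theorem part
  intro F G H hFd hGd hHd hFf hGg hHψ z hz
  have hreal : ∀ x : ℝ, F (x : ℂ) * G (x : ℂ) = H (x : ℂ) := by
    intro x
    rw [hFf x, hGg x, hHψ x]
    unfold invFourier
    have key := conv_fourier f g hfc hgc hintf hintg x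
    have h2 : (∫ m : ℝ, ψ m * Complex.exp (Complex.I * x * m))
        = (1 / Real.sqrt (2 * Real.pi) : ℂ) *
          ((∫ m : ℝ, f m * Complex.exp (Complex.I * x * m)) *
            ∫ m : ℝ, g m * Complex.exp (Complex.I * x * m)) := by
      rw [← key]
      calc (∫ m : ℝ, ψ m * Complex.exp (Complex.I * x * m))
          = ∫ m : ℝ, (1 / Real.sqrt (2 * Real.pi) : ℂ) *
              ((∫ b : ℝ, f (m - b) * g b) * Complex.exp (Complex.I * x * m)) := by
            refine integral_congr_ae (Filter.Eventually.of_forall fun m => ?_)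
            simp only [hψdef]; ring
        _ = _ := integral_const_mul _ _
    rw [h2]; ring
  have hopen : IsOpen (Hstrip β) := by
    have : Hstrip β = Complex.im ⁻¹' (Set.Ioo (-β) β) := by ext w; simp [Hstrip, abs_lt]
    rw [this]; exact isOpen_Ioo.preimage Complex.continuous_im
  have hconv : Convex ℝ (Hstrip β) := by
    have : Hstrip β = Complex.imLm ⁻¹' (Set.Ioo (-β) β) := by
      ext w; simp [Hstrip, abs_lt, Complex.imLm]
    rw [this]
    exact (convex_Ioo (-β) β).linear_preimage _
  have hFG : AnalyticOnNhd ℂ (fun w => F w * G w) (Hstrip β) :=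
    ((hFd.mul hGd).analyticOnNhd hopen)
  have hH : AnalyticOnNhd ℂ H (Hstrip β) := hHd.analyticOnNhd hopen
  have h0 : (0:ℂ) ∈ Hstrip β := by simp [Hstrip, hβ]
  have htend : Filter.Tendsto (fun n : ℕ => ((((n:ℝ)+1)⁻¹ : ℝ) : ℂ)) Filter.atTop
      (nhdsWithin 0 {(0:ℂ)}ᶜ) := by
    apply tendsto_nhdsWithin_of_tendsto_nhds_of_eventually_within
    · have h1 : Filter.Tendsto (fun n : ℕ => (((n:ℝ)+1)⁻¹ : ℝ)) Filter.atTop (nhds 0) := by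
        simpa [one_div] using tendsto_one_div_add_atTop_nhds_zero_nat (𝕜 := ℝ)
      have := (Complex.continuous_ofReal.tendsto (0:ℝ)).comp h1
      simpa [Function.comp_def] using this
    · filter_upwards with n
      simp only [Set.mem_compl_iff, Set.mem_singleton_iff]
      exact_mod_cast (by positivity : ((n:ℝ)+1)⁻¹ ≠ 0)
  have hfreq : ∃ᶠ w in nhdsWithin (0:ℂ) {(0:ℂ)}ᶜ, F w * G w = H w :=
    htend.frequently (Filter.Frequently.of_forall fun n => hreal _)
  exact hFG.eqOn_of_preconnected_of_frequently_eq hH hconv.isPreconnected h0 hfreq hz
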